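/- Let g(Λ) = √((32 − 16 cos Λ − 16 cos²Λ) / (13 + 10 cos Λ + cos²Λ)). Then g(Λ) = Λ − (1/2880)Λ⁵ + O(Λ⁷) as Λ → 0⁺. -/

import Mathlib

open Finset

lemma cos8 {x : ℝ} (hx : |x| ≤ 1) :
    |Real.cos x - (1 - x^2/2 + x^4/24 - x^6/720)| ≤ x^8 * (1/35000) := by
  set I := Complex.I
  have habs : ‖x*I‖ = |x| := by simp [I]
  have habs2 : ‖-x*I‖ = |x| := by simp [I]
  have hb1 : ‖Complex.exp (x*I) - ∑ m ∈ Finset.range 9, (x*I)^m / m.factorial‖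
      ≤ |x|^9 * (10/3265920) := by
    have := Complex.exp_bound (x := (x:ℂ)*I) (le_of_eq_of_le habs hx) (n := 9) (by norm_num)
    rw [habs] at this
    convert this using 2
    norm_num [Nat.factorial]
  have hb2 : ‖Complex.exp (-x*I) - ∑ m ∈ Finset.range 9, (-x*I)^m / m.factorial‖
      ≤ |x|^9 * (10/3265920) := by
    have := Complex.exp_bound (x := -(x:ℂ)*I) (le_of_eq_of_le habs2 hx) (n := 9) (by norm_num)
    rw [habs2] at this
    convert this using 2
    norm_num [Nat.factorial]
  have hS : (∑ m ∈ Finset.range 9, (x*I)^m / m.factorial)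
      + (∑ m ∈ Finset.range 9, (-x*I)^m / m.factorial)
      = 2*((1 - x^2/2 + x^4/24 - x^6/720 + x^8/40320 : ℝ) : ℂ) := by
    norm_num [I, Finset.sum_range_succ, Nat.factorial, pow_succ, Complex.ext_iff]
    constructor <;> ring
  have hc : ((Real.cos x - (1 - x^2/2 + x^4/24 - x^6/720 + x^8/40320) : ℝ) : ℂ)
      = ((Complex.exp (x*I) - ∑ m ∈ Finset.range 9, (x*I)^m / m.factorial)
      + (Complex.exp (-x*I) - ∑ m ∈ Finset.range 9, (-x*I)^m / m.factorial))/2 := by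
    have h1 : ((Real.cos x : ℝ) : ℂ) = (Complex.exp (x*I) + Complex.exp (-x*I))/2 := by
      rw [Complex.ofReal_cos]
      simp [Complex.cos, I]
    push_cast
    rw [eq_div_iff (two_ne_zero' ℂ)]
    push_cast at h1 hS
    linear_combination 2*h1 + hS
  have hkey : |Real.cos x - (1 - x^2/2 + x^4/24 - x^6/720 + x^8/40320)| ≤ |x|^9 * (10/3265920) := by
    calc |Real.cos x - (1 - x^2/2 + x^4/24 - x^6/720 + x^8/40320)|
        = ‖((Real.cos x - (1 - x^2/2 + x^4/24 - x^6/720 + x^8/40320) : ℝ) : ℂ)‖ := by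
          rw [Complex.norm_real, Real.norm_eq_abs]
      _ = ‖((Complex.exp (x*I) - ∑ m ∈ Finset.range 9, (x*I)^m / m.factorial)
          + (Complex.exp (-x*I) - ∑ m ∈ Finset.range 9, (-x*I)^m / m.factorial))/2‖ := by rw [hc]
      _ ≤ (‖Complex.exp (x*I) - ∑ m ∈ Finset.range 9, (x*I)^m / m.factorial‖
          + ‖Complex.exp (-x*I) - ∑ m ∈ Finset.range 9, (-x*I)^m / m.factorial‖)/2 := by
          rw [norm_div, Complex.norm_two]
          gcongr
          exact norm_add_le _ _
      _ ≤ |x|^9 * (10/3265920) := by linarith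
  have h9 : |x|^9 ≤ x^8 := by
    calc |x|^9 ≤ |x|^8 := pow_le_pow_of_le_one (abs_nonneg x) hx (by norm_num)
      _ = x^8 := by rw [← _root_.abs_pow, _root_.abs_of_nonneg (by positivity : (0:ℝ) ≤ x^8)]
  calc |Real.cos x - (1 - x^2/2 + x^4/24 - x^6/720)|
      ≤ |Real.cos x - (1 - x^2/2 + x^4/24 - x^6/720 + x^8/40320)| + |x^8/40320| := by
        have h : Real.cos x - (1 - x^2/2 + x^4/24 - x^6/720)
            = (Real.cos x - (1 - x^2/2 + x^4/24 - x^6/720 + x^8/40320)) + x^8/40320 := by ring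
        rw [h]; exact abs_add_le _ _
    _ ≤ |x|^9 * (10/3265920) + x^8/40320 := by
        rw [_root_.abs_of_nonneg (by positivity : (0:ℝ) ≤ x^8/40320)]
        gcongr
    _ ≤ x^8 * (10/3265920) + x^8/40320 := by nlinarith
    _ ≤ x^8 * (1/35000) := by nlinarith [pow_nonneg (abs_nonneg x) 8, sq_nonneg x, h9, pow_nonneg (sq_nonneg x) 4]

open Real Filter Asymptotics Topology

set_option maxHeartbeats 2000000 in
theorem stmt16 :
    (fun Λ : ℝ =>
        Real.sqrt ((32 - 16 * Real.cos Λ - 16 * Real.cos Λ ^ 2) /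
          (13 + 10 * Real.cos Λ + Real.cos Λ ^ 2))
        - (Λ - (1/2880) * Λ^5)) =O[𝓝[>] (0:ℝ)] (fun Λ => Λ^7) := by
  rw [isBigO_iff]
  refine ⟨1/100, ?_⟩
  filter_upwards [Ioo_mem_nhdsGT_of_mem (by norm_num : (0:ℝ) ∈ Set.Ico 0 (1/2))] with x hx
  obtain ⟨h0, h12⟩ := hx
  have hx1 : |x| ≤ 1 := by rw [abs_of_pos h0]; linarith
  set c := Real.cos x with hcdef
  set E := c - (1 - x^2/2 + x^4/24 - x^6/720) with hEdef
  have hE : |E| ≤ x^8 * (1/35000) := cos8 hx1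
  have hc1 : |c| ≤ 1 := Real.abs_cos_le_one x
  have hcu : c ≤ 1 := (abs_le.1 hc1).2
  have hcl : -1 ≤ c := (abs_le.1 hc1).1
  -- power bounds
  have hp2 : x^2 ≤ 1/4 := by nlinarith
  have hp4 : x^4 ≤ 1/16 := by nlinarith
  have hp6 : x^6 ≤ 1/64 := by nlinarith
  have hp8 : x^8 ≤ 1/256 := by nlinarith
  have hp10 : x^10 ≤ 1 := by nlinarith
  have hp12 : x^12 ≤ 1 := by nlinarith
  have hp14 : x^14 ≤ 1 := by nlinarith
  have hE1 : |E| ≤ 1 := le_trans hE (by nlinarith)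
  set b := x - (1/2880) * x^5 with hbdef
  have hb0 : x/2 ≤ b := by rw [hbdef]; nlinarith
  have hbpos : 0 < b := lt_of_lt_of_le (by linarith) hb0
  have hb1 : b ≤ 1 := by rw [hbdef]; nlinarith
  have hB0 : 0 ≤ b^2 := sq_nonneg b
  have hB1 : b^2 ≤ 1 := by nlinarith
  set q : ℝ := 1 - x^2/2 + x^4/24 - x^6/720 with hqdef
  have hq0 : 0 ≤ q := by rw [hqdef]; nlinarith
  have hq1 : q ≤ 1 := by rw [hqdef]; nlinarith
  set d := 13 + 10 * c + c^2 with hddef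
  have hd4 : 4 ≤ d := by rw [hddef]; nlinarith
  have hdpos : 0 < d := by linarith
  set N := 32 - 16 * c - 16 * c^2 - b^2 * d with hNdef
  set R : ℝ := 1/240 - 29/38400*x^2 + 187/4147200*x^4 + 1/6635520*x^6 - 73/995328000*x^8
      + 23/23887872000*x^10 + 1/71663616000*x^12 - 1/4299816960000*x^14 with hRdef
  set S : ℝ := -16 - 10*b^2 - (16 + b^2)*(2*q + E) with hSdef
  have hcq : c = q + E := by rw [hEdef, hqdef]; ring
  have hid : N = x^8 * R + E * S := by
    rw [hNdef, hddef, hcq, hbdef, hqdef, hRdef, hSdef, hbdef, hqdef]; ring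
  have hR : |R| ≤ 1/100 := by
    rw [abs_le, hRdef]
    constructor <;> nlinarith [pow_nonneg h0.le 2, pow_nonneg h0.le 4, pow_nonneg h0.le 6,
      pow_nonneg h0.le 8, pow_nonneg h0.le 10, pow_nonneg h0.le 12, pow_nonneg h0.le 14]
  have hS : |S| ≤ 80 := by
    have hEl : -1 ≤ E := (abs_le.1 hE1).1
    have hEu : E ≤ 1 := (abs_le.1 hE1).2
    have hP1 : (16 + b^2)*(2*q + E) ≤ 51 := by nlinarith
    have hP2 : -17 ≤ (16 + b^2)*(2*q + E) := by nlinarith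
    rw [abs_le, hSdef]; constructor <;> nlinarith
  have hN : |N| ≤ x^8 * (1/50) := by
    rw [hid]
    calc |x^8 * R + E * S| ≤ |x^8 * R| + |E * S| := abs_add_le _ _
      _ = x^8 * |R| + |E| * |S| := by
          rw [abs_mul, abs_mul, abs_of_nonneg (pow_nonneg h0.le 8)]
      _ ≤ x^8 * (1/100) + (x^8 * (1/35000)) * 80 := by
          gcongr <;> first | exact abs_nonneg E | assumption
      _ ≤ x^8 * (1/50) := by nlinarith [pow_nonneg h0.le 8]
  set a := (32 - 16 * c - 16 * c^2) / d with hadef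
  have ha : 0 ≤ a := by
    apply div_nonneg _ hdpos.le
    nlinarith
  have hab : a - b^2 = N / d := by
    rw [hadef, hNdef]; field_simp
  have hdiff : |a - b^2| ≤ x^8 * (1/200) := by
    rw [hab, abs_div, abs_of_pos hdpos]
    calc |N| / d ≤ (x^8 * (1/50)) / 4 :=
          div_le_div₀ (by positivity) hN (by norm_num) hd4
      _ = x^8 * (1/200) := by ring
  have hsum_pos : 0 < Real.sqrt a + b := by positivity
  have hsub : Real.sqrt a - b = (a - b^2) / (Real.sqrt a + b) := by
    rw [eq_div_iff (ne_of_gt hsum_pos)]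
    have hs : Real.sqrt a ^ 2 = a := Real.sq_sqrt ha
    linear_combination hs
  have hfinal : |Real.sqrt a - b| ≤ (1/100) * x^7 := by
    rw [hsub, abs_div, abs_of_pos hsum_pos]
    have h1 : |a - b^2| / (Real.sqrt a + b) ≤ |a - b^2| / b :=
      div_le_div_of_nonneg_left (abs_nonneg _) hbpos (le_add_of_nonneg_left (Real.sqrt_nonneg a))
    have h2 : |a - b^2| / b ≤ (x^8 * (1/200)) / (x/2) :=
      div_le_div₀ (by positivity) hdiff (by linarith) hb0
    have h3 : (x^8 * (1/200)) / (x/2) = (1/100) * x^7 := by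
      field_simp
      ring
    linarith [h1, h2, h3.le]
  rw [Real.norm_eq_abs, Real.norm_eq_abs, abs_of_pos (pow_pos h0 7)]
  exact hfinal
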